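/- Let W be an (s+t)-dimensional vector space over F_q with s ≥ t ≥ 1, and let U be an s-dimensional subspace of W. Then there exists a family S of t-dimensional subspaces of W, each having trivial intersection with U, such that every 1-dimensional subspace of W not contained in U is contained in exactly one element of S. -/

import Mathlib

open Polynomial Module

noncomputable section AuxSpread

lemma aux_finrank (K : Type*) [Field K] [Fintype K] (s : ℕ) (hs : s ≠ 0) :
    Module.finrank K (SplittingField (X ^ (Fintype.card K)^s - X : K[X])) = s := by
  classical
  set q := Fintype.card K with hqdef
  have hq1 : 1 < q := Fintype.one_lt_card
  set pc := ringChar K with hpcdef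
  haveI hfact : Fact pc.Prime := ⟨CharP.char_is_prime K pc⟩
  obtain ⟨n, hp, hqn⟩ := FiniteField.card K pc
  set L := SplittingField (X ^ q ^ s - X : K[X]) with hLdef
  haveI : CharP L pc := charP_of_injective_algebraMap (algebraMap K L).injective pc
  have hQ : q ^ s = pc ^ ((n : ℕ) * s) := by rw [hqdef, hqn, ← pow_mul]
  have hdvd : pc ∣ q ^ s := by
    rw [hQ]; exact dvd_pow_self pc (by positivity)
  set g : K[X] := X ^ q ^ s - X with hgdef
  have gne : g ≠ 0 := FiniteField.X_pow_card_pow_sub_X_ne_zero K hs hq1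
  have gsep : g.Separable := galois_poly_separable pc (q ^ s) hdvd
  have key : Fintype.card (g.rootSet L) = g.natDegree :=
    card_rootSet_eq_natDegree gsep (SplittingField.splits g)
  have hdeg : g.natDegree = q ^ s := FiniteField.X_pow_card_pow_sub_X_natDegree_eq K hs hq1
  -- Frobenius as a K-algebra endomorphism of L
  have hfrob_comm : ∀ r : K, (algebraMap K L r) ^ q ^ s = algebraMap K L r := by
    intro r
    rw [← map_pow, FiniteField.pow_card_pow]
  let F : L →ₐ[K] L :=
    { toRingHom := iterateFrobenius L pc ((n : ℕ) * s)
      commutes' := fun r => by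
        show iterateFrobenius L pc ((n : ℕ) * s) (algebraMap K L r) = algebraMap K L r
        rw [iterateFrobenius_def, ← hQ]
        exact hfrob_comm r }
  have hroot_univ : g.rootSet L = Set.univ := by
    rw [Set.eq_univ_iff_forall]
    intro x
    have hx : x ∈ (⊤ : Subalgebra K L) := trivial
    rw [← SplittingField.adjoin_rootSet] at hx
    have hle : Algebra.adjoin K (g.rootSet L) ≤ AlgHom.equalizer F (AlgHom.id K L) := by
      rw [Algebra.adjoin_le_iff]
      intro y hy
      have : aeval y g = 0 := (mem_rootSet_of_ne gne).mp hy
      simp only [hgdef, map_sub, map_pow, aeval_X] at this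
      have : y ^ q ^ s = y := sub_eq_zero.mp this
      show F y = y
      simp only [F, AlgHom.coe_mk, iterateFrobenius_def, ← hQ]
      exact this
    have hfx : F x = x := hle hx
    have hxx : x ^ q ^ s = x := by
      have : iterateFrobenius L pc ((n : ℕ) * s) x = x := hfx
      rwa [iterateFrobenius_def, ← hQ] at this
    rw [mem_rootSet_of_ne gne]
    simp only [hgdef, map_sub, map_pow, aeval_X]
    rw [hxx, sub_self]
  haveI : Finite L := Module.finite_of_finite K
  haveI : Fintype L := Fintype.ofFinite L
  have h1 : Nat.card (g.rootSet L) = Nat.card L := by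
    rw [hroot_univ]
    exact Nat.card_congr (Equiv.Set.univ L)
  have hcardL : Fintype.card L = q ^ s := by
    rw [← Nat.card_eq_fintype_card, ← h1, Nat.card_eq_fintype_card, key, hdeg]
  have h2 : Fintype.card L = q ^ Module.finrank K L := by
    rw [card_eq_pow_finrank (K := K) (V := L)]
  have h3 : q ^ s = q ^ Module.finrank K L := hcardL.symm.trans h2
  exact (Nat.pow_right_injective hq1 h3).symm

end AuxSpread

theorem stmt_7 (q s t : ℕ) (K : Type*) [Field K] [Fintype K] (hq : Fintype.card K = q)
    (W : Type*) [AddCommGroup W] [Module K W] [FiniteDimensional K W]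
    (hW : Module.finrank K W = s + t) (ht : 1 ≤ t) (hst : t ≤ s)
    (U : Submodule K W) (hU : Module.finrank K U = s) :
    ∃ S : Finset (Submodule K W),
      (∀ X ∈ S, Module.finrank K X = t ∧ X ⊓ U = ⊥) ∧
      (∀ v : Submodule K W, Module.finrank K v = 1 → ¬ v ≤ U → ∃! X, X ∈ S ∧ v ≤ X) := by
  classical
  have hs : s ≠ 0 := by omega
  set L := SplittingField (X ^ (Fintype.card K)^s - X : K[X]) with hLdef
  have hL : Module.finrank K L = s := aux_finrank K s hs
  haveI : Finite L := Module.finite_of_finite K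
  haveI : Fintype L := Fintype.ofFinite L
  obtain ⟨C, hUC⟩ := U.exists_isCompl
  have hC : Module.finrank K C = t := by
    have h1 := Submodule.finrank_add_eq_of_isCompl hUC
    rw [hU, hW] at h1
    omega
  -- ψ : U ≃ₗ[K] L
  let ψ : U ≃ₗ[K] L := LinearEquiv.ofFinrankEq U L (by rw [hU, hL])
  -- ι : C →ₗ[K] L, injective
  let bC : Basis (Fin t) K C := Module.finBasisOfFinrankEq K C hC
  let bL : Basis (Fin s) K L := Module.finBasisOfFinrankEq K L hL
  let f : Fin s → Fin t := fun i => if h : (i : ℕ) < t then ⟨i, h⟩ else ⟨0, ht⟩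
  have hf : Function.Surjective f := by
    intro j
    refine ⟨⟨(j : ℕ), lt_of_lt_of_le j.2 hst⟩, ?_⟩
    simp only [f, j.2, dif_pos]
  let ι : C →ₗ[K] L :=
    bL.equivFun.symm.toLinearMap ∘ₗ (LinearMap.funLeft K K f) ∘ₗ bC.equivFun.toLinearMap
  have hιinj : Function.Injective ι := by
    have hcoe : ⇑ι = ⇑bL.equivFun.symm ∘ ⇑(LinearMap.funLeft K K f) ∘ ⇑bC.equivFun := rfl
    rw [hcoe]
    exact bL.equivFun.symm.injective.comp
      ((LinearMap.funLeft_injective_of_surjective K K f hf).comp bC.equivFun.injective)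
  -- the spread maps
  let h : L → (C →ₗ[K] W) := fun a =>
    C.subtype + (U.subtype ∘ₗ ψ.symm.toLinearMap ∘ₗ (LinearMap.mulLeft K a) ∘ₗ ι)
  have happ : ∀ (a : L) (x : C), h a x = (x : W) + (ψ.symm (a * ι x) : W) := by
    intro a x; rfl
  have hmem : ∀ (a : L) (x : C), h a x ∈ U → x = 0 := by
    intro a x hxU
    have hxW : (x : W) ∈ U := by
      have : (x : W) = h a x - (ψ.symm (a * ι x) : W) := by
        rw [happ, add_sub_cancel_right]
      rw [this]
      exact Submodule.sub_mem U hxU (ψ.symm (a * ι x)).2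
    have := Submodule.disjoint_def.mp hUC.disjoint (x : W) hxW x.2
    exact Subtype.ext this
  have hinj : ∀ a : L, Function.Injective (h a) := by
    intro a
    rw [← LinearMap.ker_eq_bot, Submodule.eq_bot_iff]
    intro x hx
    rw [LinearMap.mem_ker] at hx
    exact hmem a x (hx ▸ U.zero_mem)
  let X : L → Submodule K W := fun a => LinearMap.range (h a)
  refine ⟨Finset.image X Finset.univ, ?_, ?_⟩
  · intro Y hY
    obtain ⟨a, -, rfl⟩ := Finset.mem_image.mp hY
    constructor
    · rw [LinearMap.finrank_range_of_inj (hinj a), hC]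
    · rw [Submodule.eq_bot_iff]
      intro w hw
      obtain ⟨⟨x, rfl⟩, hwU⟩ := hw
      rw [hmem a x hwU]
      exact map_zero _
  · intro v hv1 hvU
    -- get a generator
    have hvne : v ≠ ⊥ := by
      intro hbot
      rw [hbot, finrank_bot] at hv1
      omega
    obtain ⟨w, hwv, hw0⟩ := Submodule.exists_mem_ne_zero_of_ne_bot hvne
    have hspanle : Submodule.span K {w} ≤ v := by
      rw [Submodule.span_le, Set.singleton_subset_iff]; exact hwv
    have hvspan : Submodule.span K {w} = v := by
      apply Submodule.eq_of_le_of_finrank_le hspanle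
      rw [hv1, finrank_span_singleton hw0]
    have hwU : w ∉ U := by
      intro hwU
      exact hvU (hvspan ▸ Submodule.span_le.mpr (Set.singleton_subset_iff.mpr hwU))
    -- decompose w
    let pU := U.projectionOnto C hUC
    let pC := C.projectionOnto U hUC.symm
    have hdecomp : ((pU w : W) + (pC w : W)) = w :=
      Submodule.projection_add_projection_eq_self hUC w
    have hc0 : pC w ≠ 0 := by
      intro hc
      apply hwU
      rw [← hdecomp, hc]
      simpa using (pU w).2
    have hιc : ι (pC w) ≠ 0 := fun hz => hc0 (hιinj (by rw [hz, map_zero]))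
    set a₀ : L := ψ (pU w) * (ι (pC w))⁻¹ with ha₀def
    have hkey : h a₀ (pC w) = w := by
      rw [happ]
      have : a₀ * ι (pC w) = ψ (pU w) := by
        rw [ha₀def, mul_assoc, inv_mul_cancel₀ hιc, mul_one]
      rw [this, LinearEquiv.symm_apply_apply, add_comm]
      exact hdecomp
    -- uniqueness of the parameter
    have huniq : ∀ (b : L) (x : C), h b x = w → b = a₀ := by
      intro b x hbx
      have hx : x = pC w := by
        have h1 : pC (h b x) = pC w := by rw [hbx]
        rw [happ, map_add] at h1
        rw [Submodule.projectionOnto_apply_left hUC.symm x] at h1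
        rw [Submodule.projectionOnto_apply_of_mem_right hUC.symm (ψ.symm (b * ι x)).2] at h1
        rw [← h1, add_zero]
      have hu : ψ.symm (b * ι x) = pU w := by
        have h1 : pU (h b x) = pU w := by rw [hbx]
        rw [happ, map_add] at h1
        rw [Submodule.projectionOnto_apply_right hUC x] at h1
        rw [Submodule.projectionOnto_apply_left hUC (ψ.symm (b * ι x))] at h1
        rw [← h1, zero_add]
      have h2 : b * ι (pC w) = ψ (pU w) := by
        rw [← hu, ← hx, LinearEquiv.apply_symm_apply]
      rw [ha₀def, ← h2, mul_assoc, mul_inv_cancel₀ hιc, mul_one]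
    refine ⟨X a₀, ⟨Finset.mem_image_of_mem X (Finset.mem_univ a₀), ?_⟩, ?_⟩
    · rw [← hvspan, Submodule.span_le, Set.singleton_subset_iff]
      exact ⟨pC w, hkey⟩
    · rintro Y ⟨hYS, hvY⟩
      obtain ⟨b, -, rfl⟩ := Finset.mem_image.mp hYS
      obtain ⟨x, hx⟩ := hvY hwv
      rw [huniq b x hx]
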